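/- Algorithm XC ensures the regret bound R^(xc) = ∑_{t=1}^T c_t·(y⋆ − y_t) ≤ 2w√(2T) + A, where A = min{ R^(p), R^(o) } satisfies −wT ≤ A ≤ 2w√(2CT); in particular R^(xc) ≤ 2w√(2T) + 2w√(2CT). -/

import Mathlib

open Finset

/-- Dot product of real vectors indexed by a fintype. -/
def dot {ι : Type*} [Fintype ι] (a b : ι → ℝ) : ℝ := ∑ i, a i * b i

/-- The single-cache feasible set `Y = {y ∈ [0,1]^N : ∑_n y_n ≤ C}`. -/
def FeasibleY (N C : ℕ) (y : Fin N → ℝ) : Prop :=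
  (∀ n, y n ∈ Set.Icc (0 : ℝ) 1) ∧ ∑ n, y n ≤ (C : ℝ)

/-- The 2-dimensional probability simplex `Δ`. -/
def Simplex2 (u : Fin 2 → ℝ) : Prop := 0 ≤ u 0 ∧ 0 ≤ u 1 ∧ u 0 + u 1 = 1


namespace XCaux

lemma quad_nonneg (a b : ℝ) (ha : 0 ≤ a)
    (h : ∀ lam : ℝ, 0 < lam → lam ≤ 1 → 0 ≤ lam * b + lam ^ 2 * a) : 0 ≤ b := by
  by_contra hb
  push_neg at hb
  have ha1 : 0 < a + 1 := by linarith
  have hb' : 0 < -b := by linarith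
  set lam := min 1 (-b / (a + 1)) with hlam
  have hl0 : 0 < lam := lt_min one_pos (div_pos hb' ha1)
  have hl1 : lam ≤ 1 := min_le_left _ _
  have h2 : lam ≤ -b / (a + 1) := min_le_right _ _
  have h3 := h lam hl0 hl1
  have h4 : lam * (a + 1) ≤ -b := by
    rw [le_div_iff₀ ha1] at h2; exact h2
  nlinarith [mul_le_mul_of_nonneg_left h4 hl0.le, mul_pos hl0 hl0]

lemma sum_tele (f : ℕ → ℝ) (T : ℕ) :
    ∑ t ∈ Finset.Icc 1 T, (f t - f (t - 1)) = f T - f 0 := by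
  induction T with
  | zero => simp
  | succ n ih =>
    rw [Finset.sum_Icc_succ_top (Nat.le_add_left 1 n), ih]
    simp only [Nat.add_sub_cancel]
    ring

lemma abel_bound (T : ℕ) (D : ℕ → ℝ)
    (hD : ∀ t, 1 ≤ t → t ≤ T + 1 → 0 ≤ D t ∧ D t ≤ 1) :
    ∑ t ∈ Finset.Icc 1 T, Real.sqrt t * (D t - D (t + 1))
      ≤ Real.sqrt T * (1 - D (T + 1)) := by
  induction T with
  | zero => simp
  | succ n ih =>
    have ih' := ih (fun t h1 h2 => hD t h1 (by omega))
    rw [Finset.sum_Icc_succ_top (Nat.le_add_left 1 n)]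
    have h1 : Real.sqrt n ≤ Real.sqrt (n + 1 : ℕ) := by
      apply Real.sqrt_le_sqrt; push_cast; linarith
    have h2 := hD (n + 1) (by omega) (by omega)
    have h3 := hD (n + 2) (by omega) (by omega)
    have hs : (0:ℝ) ≤ Real.sqrt (n + 1 : ℕ) := Real.sqrt_nonneg _
    have hmul : Real.sqrt n * (1 - D (n+1)) ≤ Real.sqrt (n+1:ℕ) * (1 - D (n+1)) :=
      mul_le_mul_of_nonneg_right h1 (by linarith [h2.2])
    have : (((n:ℕ) + 1 : ℕ) : ℝ) = (n : ℝ) + 1 := by push_cast; ring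
    nlinarith [ih']

lemma sum_inv_sqrt (T : ℕ) :
    ∑ t ∈ Finset.Icc 1 T, 1 / Real.sqrt t ≤ 2 * Real.sqrt T := by
  have key : ∀ t : ℕ, t ∈ Finset.Icc 1 T →
      1 / Real.sqrt t ≤ 2 * (Real.sqrt t - Real.sqrt (t - 1 : ℕ)) := by
    intro t ht
    have ht1 : 1 ≤ t := (Finset.mem_Icc.mp ht).1
    have h1 : (1:ℝ) ≤ (t:ℝ) := by exact_mod_cast ht1
    have hc : ((t - 1 : ℕ) : ℝ) = (t : ℝ) - 1 := by
      push_cast [Nat.cast_sub ht1]; ring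
    rw [hc]
    have hst : 0 < Real.sqrt t := Real.sqrt_pos.mpr (by linarith)
    have hs1 : 0 ≤ Real.sqrt ((t:ℝ) - 1) := Real.sqrt_nonneg _
    have e1 : Real.sqrt (t:ℝ) ^ 2 = (t:ℝ) := Real.sq_sqrt (by linarith)
    have e2 : Real.sqrt ((t:ℝ) - 1) ^ 2 = (t:ℝ) - 1 := Real.sq_sqrt (by linarith)
    have hle : Real.sqrt ((t:ℝ) - 1) ≤ Real.sqrt t := Real.sqrt_le_sqrt (by linarith)
    rw [div_le_iff₀ hst]
    nlinarith
  calc ∑ t ∈ Finset.Icc 1 T, 1 / Real.sqrt t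
      ≤ ∑ t ∈ Finset.Icc 1 T, 2 * (Real.sqrt t - Real.sqrt (t - 1 : ℕ)) :=
        Finset.sum_le_sum key
    _ = 2 * ((fun t : ℕ => Real.sqrt t) T - (fun t : ℕ => Real.sqrt t) 0) := by
        rw [← Finset.mul_sum, sum_tele (fun t : ℕ => Real.sqrt t) T]
    _ ≤ 2 * Real.sqrt T := by simp

lemma proj_vi {ι : Type*} [Fintype ι] (S : (ι → ℝ) → Prop) (p z v : ι → ℝ)
    (hseg : ∀ lam : ℝ, 0 ≤ lam → lam ≤ 1 → S (fun i => p i + lam * (v i - p i)))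
    (hmin : ∀ v', S v' → ∑ i, (p i - z i) ^ 2 ≤ ∑ i, (v' i - z i) ^ 2) :
    0 ≤ ∑ i, (v i - p i) * (p i - z i) := by
  have h2 : 0 ≤ 2 * ∑ i, (v i - p i) * (p i - z i) := by
    apply quad_nonneg (∑ i, (v i - p i) ^ 2) _ (Finset.sum_nonneg fun _ _ => sq_nonneg _)
    intro lam hl0 hl1
    have hm := hmin _ (hseg lam hl0.le hl1)
    have hexp : ∑ i, (p i + lam * (v i - p i) - z i) ^ 2
        = ∑ i, (p i - z i) ^ 2
          + (lam * (2 * ∑ i, (v i - p i) * (p i - z i))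
             + lam ^ 2 * ∑ i, (v i - p i) ^ 2) := by
      simp only [Finset.mul_sum, ← Finset.sum_add_distrib]
      apply Finset.sum_congr rfl; intros; ring
    linarith [hexp ▸ hm]
  linarith

/-- One-dimensional OGD regret bound. -/
lemma ogd_1d (T : ℕ) (w : ℝ) (hw : 0 < w) (x g : ℕ → ℝ) (s : ℝ)
    (hs : s ∈ Set.Icc (0 : ℝ) 1)
    (hx : ∀ t, 1 ≤ t → t ≤ T + 1 → x t ∈ Set.Icc (0 : ℝ) 1)
    (hg : ∀ t, 1 ≤ t → t ≤ T → |g t| ≤ w)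
    (hVI : ∀ t, 1 ≤ t → t ≤ T →
      0 ≤ (s - x (t + 1)) * (x (t + 1) - (x t + 1 / (2 * w * Real.sqrt t) * g t))) :
    ∑ t ∈ Finset.Icc 1 T, g t * (s - x t) ≤ 3 / 2 * w * Real.sqrt T := by
  set D : ℕ → ℝ := fun t => (s - x t) ^ 2 with hD
  have hDbd : ∀ t, 1 ≤ t → t ≤ T + 1 → 0 ≤ D t ∧ D t ≤ 1 := by
    intro t h1 h2
    refine ⟨sq_nonneg _, ?_⟩
    have := hx t h1 h2
    simp only [Set.mem_Icc] at this hs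
    simp only [hD]
    nlinarith [this.1, this.2, hs.1, hs.2]
  have key : ∀ t ∈ Finset.Icc 1 T,
      g t * (s - x t) ≤ w * (Real.sqrt t * (D t - D (t + 1))) + w / 4 * (1 / Real.sqrt t) := by
    intro t ht
    obtain ⟨ht1, ht2⟩ := Finset.mem_Icc.mp ht
    have ht1' : (1:ℝ) ≤ (t:ℝ) := by exact_mod_cast ht1
    have hr : 0 < Real.sqrt t := Real.sqrt_pos.mpr (by linarith)
    set r := Real.sqrt t with hrdef
    set η : ℝ := 1 / (2 * w * r) with hηdef
    have hη : 0 < η := by positivity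
    have hvi := hVI t ht1 ht2
    have hgsq : g t ^ 2 ≤ w ^ 2 := by
      have := hg t ht1 ht2
      nlinarith [abs_nonneg (g t), sq_abs (g t), this]
    -- (s - x(t+1))^2 ≤ (s - (x t + η g t))^2
    have h1 : (s - x (t + 1)) ^ 2 ≤ (s - (x t + η * g t)) ^ 2 := by nlinarith [hvi]
    have hexp : (s - (x t + η * g t)) ^ 2
        = (s - x t) ^ 2 - 2 * η * (g t * (s - x t)) + η ^ 2 * g t ^ 2 := by ring
    have h2 : g t * (s - x t) * (2 * η) ≤ (D t - D (t + 1)) + η ^ 2 * g t ^ 2 := by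
      simp only [hD]
      nlinarith [h1, hexp]
    have h2η : 0 < 2 * η := by linarith
    have h3 : g t * (s - x t) ≤ ((D t - D (t + 1)) + η ^ 2 * g t ^ 2) / (2 * η) :=
      (le_div_iff₀ h2η).mpr h2
    have h4 : ((D t - D (t + 1)) + η ^ 2 * g t ^ 2) / (2 * η)
        = w * (r * (D t - D (t + 1))) + η / 2 * g t ^ 2 := by
      rw [hηdef]
      field_simp
    have h5 : η / 2 * g t ^ 2 ≤ w / 4 * (1 / r) := by
      have hw' : w ≠ 0 := ne_of_gt hw
      have hr' : r ≠ 0 := ne_of_gt hr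
      rw [hηdef]
      have step : 1 / (2 * w * r) / 2 * g t ^ 2 ≤ 1 / (2 * w * r) / 2 * w ^ 2 :=
        mul_le_mul_of_nonneg_left hgsq (by positivity)
      have eq1 : 1 / (2 * w * r) / 2 * w ^ 2 = w / 4 * (1 / r) := by
        field_simp; ring
      linarith
    calc g t * (s - x t) ≤ ((D t - D (t + 1)) + η ^ 2 * g t ^ 2) / (2 * η) := h3
      _ = w * (r * (D t - D (t + 1))) + η / 2 * g t ^ 2 := h4
      _ ≤ w * (r * (D t - D (t + 1))) + w / 4 * (1 / r) := by linarith
  calc ∑ t ∈ Finset.Icc 1 T, g t * (s - x t)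
      ≤ ∑ t ∈ Finset.Icc 1 T,
          (w * (Real.sqrt t * (D t - D (t + 1))) + w / 4 * (1 / Real.sqrt t)) :=
        Finset.sum_le_sum key
    _ = w * (∑ t ∈ Finset.Icc 1 T, Real.sqrt t * (D t - D (t + 1)))
        + w / 4 * (∑ t ∈ Finset.Icc 1 T, 1 / Real.sqrt t) := by
        rw [Finset.sum_add_distrib, Finset.mul_sum, Finset.mul_sum]
    _ ≤ w * (Real.sqrt T * (1 - D (T + 1))) + w / 4 * (2 * Real.sqrt T) := by
        have h1 := abel_bound T D hDbd
        have h2 := sum_inv_sqrt T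
        have := hDbd (T + 1) (by omega) (by omega)
        nlinarith
    _ ≤ 3 / 2 * w * Real.sqrt T := by
        have := hDbd (T + 1) (by omega) (by omega)
        have hrT : 0 ≤ Real.sqrt T := Real.sqrt_nonneg _
        nlinarith [mul_nonneg (mul_nonneg hw.le hrT) this.1]






def d2 {N : ℕ} (a b : Fin N → ℝ) : ℝ := ∑ n, (a n - b n) ^ 2

lemma d2_nonneg {N : ℕ} (a b : Fin N → ℝ) : 0 ≤ d2 a b :=
  Finset.sum_nonneg fun _ _ => sq_nonneg _

lemma d2_self {N : ℕ} (a : Fin N → ℝ) : d2 a a = 0 := by simp [d2]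

lemma d2_comm {N : ℕ} (a b : Fin N → ℝ) : d2 a b = d2 b a := by
  unfold d2; apply Finset.sum_congr rfl; intros; ring

lemma d2_scale {N : ℕ} (p v : Fin N → ℝ) (lam : ℝ) :
    d2 (fun n => p n + lam * (v n - p n)) p = lam ^ 2 * d2 v p := by
  unfold d2; rw [Finset.mul_sum]; apply Finset.sum_congr rfl; intros; ring

lemma d2_expand {N : ℕ} (y p a : Fin N → ℝ) :
    d2 y a = d2 y p + 2 * (∑ n, (y n - p n) * (p n - a n)) + d2 p a := by
  unfold d2
  rw [Finset.mul_sum, ← Finset.sum_add_distrib, ← Finset.sum_add_distrib]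
  apply Finset.sum_congr rfl; intros; ring

lemma dot_sub {ι : Type*} [Fintype ι] (c a b : ι → ℝ) :
    dot c (fun i => a i - b i) = dot c a - dot c b := by
  unfold dot; rw [← Finset.sum_sub_distrib]; apply Finset.sum_congr rfl; intros; ring

lemma dot_add' {ι : Type*} [Fintype ι] (a b v : ι → ℝ) :
    dot (fun i => a i + b i) v = dot a v + dot b v := by
  unfold dot; rw [← Finset.sum_add_distrib]; apply Finset.sum_congr rfl; intros; ring

lemma dot_delta {N : ℕ} (wt : ℝ) (m : Fin N) (v : Fin N → ℝ) :
    dot (fun n => if n = m then wt else 0) v = wt * v m := by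
  unfold dot
  rw [Finset.sum_eq_single m]
  · simp
  · intro b _ hb; simp [hb]
  · intro h; exact absurd (Finset.mem_univ m) h

lemma dot_sum_left {ι : Type*} [Fintype ι] (s : Finset ℕ) (c : ℕ → ι → ℝ) (v : ι → ℝ) :
    dot (fun i => ∑ t ∈ s, c t i) v = ∑ t ∈ s, dot (c t) v := by
  unfold dot
  rw [Finset.sum_comm]
  apply Finset.sum_congr rfl; intros; rw [Finset.sum_mul]

lemma feasible_segment {N C : ℕ} (p v : Fin N → ℝ)
    (hp : FeasibleY N C p) (hv : FeasibleY N C v) (lam : ℝ) (h0 : 0 ≤ lam) (h1 : lam ≤ 1) :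
    FeasibleY N C (fun n => p n + lam * (v n - p n)) := by
  obtain ⟨hp1, hp2⟩ := hp
  obtain ⟨hv1, hv2⟩ := hv
  constructor
  · intro n
    have := hp1 n; have := hv1 n
    simp only [Set.mem_Icc] at *
    constructor <;> nlinarith [ (hp1 n).1, (hp1 n).2, (hv1 n).1, (hv1 n).2]
  · have : ∑ n, (p n + lam * (v n - p n)) = (∑ n, p n) + lam * ((∑ n, v n) - ∑ n, p n) := by
      rw [Finset.sum_add_distrib, ← Finset.sum_sub_distrib, ← Finset.mul_sum]
    rw [this]
    nlinarith

lemma simplex_segment (p v : Fin 2 → ℝ)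
    (hp : Simplex2 p) (hv : Simplex2 v) (lam : ℝ) (h0 : 0 ≤ lam) (h1 : lam ≤ 1) :
    Simplex2 (fun k => p k + lam * (v k - p k)) := by
  obtain ⟨hp0, hp1, hp2⟩ := hp
  obtain ⟨hv0, hv1, hv2⟩ := hv
  refine ⟨?_, ?_, ?_⟩
  · show 0 ≤ p 0 + lam * (v 0 - p 0); nlinarith
  · show 0 ≤ p 1 + lam * (v 1 - p 1); nlinarith
  · show p 0 + lam * (v 0 - p 0) + (p 1 + lam * (v 1 - p 1)) = 1; nlinarith

lemma d2_le_2C {N C : ℕ} (a b : Fin N → ℝ) (ha : FeasibleY N C a) (hb : FeasibleY N C b) :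
    d2 a b ≤ 2 * (C : ℝ) := by
  unfold d2
  calc ∑ n, (a n - b n) ^ 2 ≤ ∑ n, (a n + b n) := by
        apply Finset.sum_le_sum
        intro n _
        have h1 := ha.1 n; have h2 := hb.1 n
        simp only [Set.mem_Icc] at h1 h2
        nlinarith [h1.1, h1.2, h2.1, h2.2]
    _ = (∑ n, a n) + ∑ n, b n := Finset.sum_add_distrib
    _ ≤ 2 * C := by have := ha.2; have := hb.2; linarith

/-- The FTRL objective. -/
noncomputable def Fobj {N : ℕ} (σt : ℕ → ℝ) (yp c : ℕ → Fin N → ℝ) (t : ℕ) (y : Fin N → ℝ) : ℝ :=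
  (∑ τ ∈ Finset.Icc 1 t, σt τ / 2 * d2 y (yp τ))
    - dot (fun n => ∑ τ ∈ Finset.Icc 1 t, c τ n) y

lemma Fobj_zero {N : ℕ} (σt : ℕ → ℝ) (yp c : ℕ → Fin N → ℝ) (y : Fin N → ℝ) :
    Fobj σt yp c 0 y = 0 := by simp [Fobj, dot]

lemma Fobj_succ {N : ℕ} (σt : ℕ → ℝ) (yp c : ℕ → Fin N → ℝ) (t : ℕ) (y : Fin N → ℝ) :
    Fobj σt yp c (t + 1) y
      = Fobj σt yp c t y + (σt (t + 1) / 2 * d2 y (yp (t + 1)) - dot (c (t + 1)) y) := by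
  unfold Fobj
  rw [Finset.sum_Icc_succ_top (Nat.le_add_left 1 t)]
  have hfun : (fun n => ∑ τ ∈ Finset.Icc 1 (t + 1), c τ n)
      = fun n => (∑ τ ∈ Finset.Icc 1 t, c τ n) + c (t + 1) n := by
    funext n; rw [Finset.sum_Icc_succ_top (Nat.le_add_left 1 t)]
  rw [hfun, dot_add']
  ring

lemma Fobj_diff {N : ℕ} (σt : ℕ → ℝ) (yp c : ℕ → Fin N → ℝ) (t : ℕ) (y p : Fin N → ℝ) :
    Fobj σt yp c t y
      = Fobj σt yp c t p + (∑ τ ∈ Finset.Icc 1 t, σt τ) / 2 * d2 y p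
        + ∑ n, (y n - p n) *
            ((∑ τ ∈ Finset.Icc 1 t, σt τ * (p n - yp τ n)) - ∑ τ ∈ Finset.Icc 1 t, c τ n) := by
  have e1 : ∀ τ : ℕ, σt τ / 2 * d2 y (yp τ)
      = σt τ / 2 * d2 p (yp τ) + σt τ / 2 * d2 y p
        + ∑ n, (y n - p n) * (σt τ * (p n - yp τ n)) := by
    intro τ
    have h := d2_expand y p (yp τ)
    have h2 : ∑ n, (y n - p n) * (σt τ * (p n - yp τ n))
        = σt τ * ∑ n, (y n - p n) * (p n - yp τ n) := by
      rw [Finset.mul_sum]; apply Finset.sum_congr rfl; intros; ring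
    rw [h2, h]
    ring
  have e2 : ∑ τ ∈ Finset.Icc 1 t, σt τ / 2 * d2 y (yp τ)
      = (∑ τ ∈ Finset.Icc 1 t, σt τ / 2 * d2 p (yp τ))
        + (∑ τ ∈ Finset.Icc 1 t, σt τ) / 2 * d2 y p
        + ∑ n, (y n - p n) * (∑ τ ∈ Finset.Icc 1 t, σt τ * (p n - yp τ n)) := by
    calc ∑ τ ∈ Finset.Icc 1 t, σt τ / 2 * d2 y (yp τ)
        = ∑ τ ∈ Finset.Icc 1 t,
            (σt τ / 2 * d2 p (yp τ) + σt τ / 2 * d2 y p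
              + ∑ n, (y n - p n) * (σt τ * (p n - yp τ n))) :=
          Finset.sum_congr rfl fun τ _ => e1 τ
      _ = (∑ τ ∈ Finset.Icc 1 t, σt τ / 2 * d2 p (yp τ))
          + (∑ τ ∈ Finset.Icc 1 t, σt τ / 2 * d2 y p)
          + ∑ τ ∈ Finset.Icc 1 t, ∑ n, (y n - p n) * (σt τ * (p n - yp τ n)) := by
          rw [Finset.sum_add_distrib, Finset.sum_add_distrib]
      _ = (∑ τ ∈ Finset.Icc 1 t, σt τ / 2 * d2 p (yp τ))
          + (∑ τ ∈ Finset.Icc 1 t, σt τ) / 2 * d2 y p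
          + ∑ n, (y n - p n) * (∑ τ ∈ Finset.Icc 1 t, σt τ * (p n - yp τ n)) := by
          congr 1
          · congr 1
            rw [Finset.sum_div, Finset.sum_mul]
          · rw [Finset.sum_comm]
            apply Finset.sum_congr rfl
            intros n _
            rw [Finset.mul_sum]
  have e3 : dot (fun n => ∑ τ ∈ Finset.Icc 1 t, c τ n) y
      = dot (fun n => ∑ τ ∈ Finset.Icc 1 t, c τ n) p
        + ∑ n, (y n - p n) * (∑ τ ∈ Finset.Icc 1 t, c τ n) := by
    unfold dot
    rw [← Finset.sum_add_distrib]
    apply Finset.sum_congr rfl; intros; ring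
  have e4 : ∑ n, (y n - p n) *
        ((∑ τ ∈ Finset.Icc 1 t, σt τ * (p n - yp τ n)) - ∑ τ ∈ Finset.Icc 1 t, c τ n)
      = (∑ n, (y n - p n) * (∑ τ ∈ Finset.Icc 1 t, σt τ * (p n - yp τ n)))
        - ∑ n, (y n - p n) * (∑ τ ∈ Finset.Icc 1 t, c τ n) := by
    rw [← Finset.sum_sub_distrib]
    apply Finset.sum_congr rfl; intros; ring
  unfold Fobj
  rw [e2, e3, e4]
  ring


set_option maxHeartbeats 1000000 in
lemma ftrl_regret (N C T : ℕ) (hC : 1 ≤ C) (w : ℝ) (hw : 0 < w)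
    (wt : ℕ → ℝ) (hwt : ∀ t, wt t ∈ Set.Icc 0 w) (nt : ℕ → Fin N)
    (c : ℕ → Fin N → ℝ) (hc : ∀ t, c t = fun n => if n = nt t then wt t else 0)
    (G : ℕ → ℝ) (hG : ∀ t, G t = ∑ τ ∈ Finset.Icc 1 t, ∑ n, (c τ n) ^ 2)
    (σ : ℝ) (hσ : σ = 2 / Real.sqrt (2 * (C : ℝ)))
    (σt : ℕ → ℝ) (hσt : ∀ t, σt t = σ * (Real.sqrt (G t) - Real.sqrt (G (t - 1))))
    (yp : ℕ → Fin N → ℝ)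
    (hyp1 : FeasibleY N C (yp 1))
    (hpstep : ∀ t, 1 ≤ t →
      FeasibleY N C (yp (t + 1)) ∧
      ∀ y', FeasibleY N C y' →
        (∑ τ ∈ Finset.Icc 1 t, σt τ / 2 * ∑ n, (yp (t + 1) n - yp τ n) ^ 2)
            - dot (fun n => ∑ τ ∈ Finset.Icc 1 t, c τ n) (yp (t + 1))
          ≤ (∑ τ ∈ Finset.Icc 1 t, σt τ / 2 * ∑ n, (y' n - yp τ n) ^ 2)
            - dot (fun n => ∑ τ ∈ Finset.Icc 1 t, c τ n) y')
    (ystar : Fin N → ℝ) (hystar : FeasibleY N C ystar) :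
    ∑ t ∈ Finset.Icc 1 T, dot (c t) (fun n => ystar n - yp t n)
      ≤ 2 * w * Real.sqrt (2 * (C : ℝ) * (T : ℝ)) := by
  -- basic numeric facts
  have hC1 : (1 : ℝ) ≤ (C : ℝ) := by exact_mod_cast hC
  have h2C : (0 : ℝ) < 2 * C := by linarith
  have hsC : 0 < Real.sqrt (2 * (C : ℝ)) := Real.sqrt_pos.mpr h2C
  have hsC2 : Real.sqrt (2 * (C : ℝ)) ^ 2 = 2 * (C : ℝ) := Real.sq_sqrt h2C.le
  have hσpos : 0 < σ := by rw [hσ]; positivity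
  -- gradient norms
  have hgt : ∀ t, (∑ n, (c t n) ^ 2) = wt t ^ 2 := by
    intro t
    rw [hc t]
    rw [Finset.sum_eq_single (nt t)]
    · simp
    · intro b _ hb; simp [hb]
    · intro h; exact absurd (Finset.mem_univ (nt t)) h
  have hG0 : G 0 = 0 := by rw [hG]; simp
  have hGrec : ∀ t, 1 ≤ t → G t = G (t - 1) + wt t ^ 2 := by
    intro t ht
    obtain ⟨k, rfl⟩ : ∃ k, t = k + 1 := ⟨t - 1, by omega⟩
    rw [hG, hG, Finset.sum_Icc_succ_top (Nat.le_add_left 1 k)]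
    simp [hgt]
  have hGnn : ∀ t, 0 ≤ G t := by
    intro t; rw [hG]; apply Finset.sum_nonneg; intros; positivity
  have hGmono : ∀ t, 1 ≤ t → G (t - 1) ≤ G t := by
    intro t ht; rw [hGrec t ht]; nlinarith [sq_nonneg (wt t)]
  have hsGmono : ∀ t, 1 ≤ t → Real.sqrt (G (t - 1)) ≤ Real.sqrt (G t) := by
    intro t ht; exact Real.sqrt_le_sqrt (hGmono t ht)
  have hσtnn : ∀ t, 0 ≤ σt t := by
    intro t
    rcases Nat.eq_zero_or_pos t with h0 | h1
    · subst h0; rw [hσt]; simp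
    · rw [hσt]; have := hsGmono t h1; nlinarith
  -- feasibility of iterates
  have hfeas : ∀ t, 1 ≤ t → FeasibleY N C (yp t) := by
    intro t
    induction t with
    | zero => intro h; omega
    | succ k ih =>
      intro _
      rcases Nat.eq_zero_or_pos k with h0 | h1
      · subst h0; exact hyp1
      · exact (hpstep k h1).1
  -- minimality of iterates
  have hFmin : ∀ t, ∀ y', FeasibleY N C y' →
      XCaux.Fobj σt yp c t (yp (t + 1)) ≤ XCaux.Fobj σt yp c t y' := by
    intro t y' hy'
    rcases Nat.eq_zero_or_pos t with h0 | h1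
    · subst h0; rw [XCaux.Fobj_zero, XCaux.Fobj_zero]
    · have := (hpstep t h1).2 y' hy'
      simpa [XCaux.Fobj, XCaux.d2] using this
  -- cumulated strengths
  have hS : ∀ t, ∑ τ ∈ Finset.Icc 1 t, σt τ = σ * Real.sqrt (G t) := by
    intro t
    calc ∑ τ ∈ Finset.Icc 1 t, σt τ
        = ∑ τ ∈ Finset.Icc 1 t,
            (σ * ((fun s => Real.sqrt (G s)) τ - (fun s => Real.sqrt (G s)) (τ - 1))) :=
          Finset.sum_congr rfl fun τ _ => by rw [hσt]
      _ = σ * ∑ τ ∈ Finset.Icc 1 t,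
            ((fun s => Real.sqrt (G s)) τ - (fun s => Real.sqrt (G s)) (τ - 1)) := by
          rw [Finset.mul_sum]
      _ = σ * (Real.sqrt (G t) - Real.sqrt (G 0)) := by
          rw [XCaux.sum_tele (fun s => Real.sqrt (G s)) t]
      _ = σ * Real.sqrt (G t) := by rw [hG0, Real.sqrt_zero]; ring
  -- strong minimality
  have hstrong : ∀ t, ∀ y', FeasibleY N C y' →
      XCaux.Fobj σt yp c t (yp (t + 1)) + σ * Real.sqrt (G t) / 2 * XCaux.d2 y' (yp (t + 1))
        ≤ XCaux.Fobj σt yp c t y' := by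
    intro t y' hy'
    have hp : FeasibleY N C (yp (t + 1)) := hfeas (t + 1) (by omega)
    have hVI : 0 ≤ ∑ n, (y' n - yp (t + 1) n) *
        ((∑ τ ∈ Finset.Icc 1 t, σt τ * (yp (t + 1) n - yp τ n))
          - ∑ τ ∈ Finset.Icc 1 t, c τ n) := by
      apply XCaux.quad_nonneg ((∑ τ ∈ Finset.Icc 1 t, σt τ) / 2 * XCaux.d2 y' (yp (t + 1)))
      · apply mul_nonneg
        · apply div_nonneg _ (by norm_num)
          exact Finset.sum_nonneg fun τ _ => hσtnn τ
        · exact XCaux.d2_nonneg _ _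
      intro lam hl0 hl1
      have hseg := XCaux.feasible_segment (yp (t + 1)) y' hp hy' lam hl0.le hl1
      have h1 := hFmin t _ hseg
      rw [XCaux.Fobj_diff σt yp c t
        (fun n => yp (t + 1) n + lam * (y' n - yp (t + 1) n)) (yp (t + 1))] at h1
      rw [XCaux.d2_scale] at h1
      have h2 : ∑ n, ((yp (t + 1) n + lam * (y' n - yp (t + 1) n)) - yp (t + 1) n) *
          ((∑ τ ∈ Finset.Icc 1 t, σt τ * (yp (t + 1) n - yp τ n))
            - ∑ τ ∈ Finset.Icc 1 t, c τ n)
          = lam * ∑ n, (y' n - yp (t + 1) n) *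
          ((∑ τ ∈ Finset.Icc 1 t, σt τ * (yp (t + 1) n - yp τ n))
            - ∑ τ ∈ Finset.Icc 1 t, c τ n) := by
        rw [Finset.mul_sum]; apply Finset.sum_congr rfl; intros; ring
      rw [h2] at h1
      linarith [h1]
    have hd := XCaux.Fobj_diff σt yp c t y' (yp (t + 1))
    rw [hS t] at hd
    linarith
  -- be-the-leader induction
  have hBTL : ∀ t, (∑ τ ∈ Finset.Icc 1 t,
        (σt τ / 2 * XCaux.d2 (yp (τ + 1)) (yp τ) - dot (c τ) (yp (τ + 1))))
      ≤ XCaux.Fobj σt yp c t (yp (t + 1)) := by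
    intro t
    induction t with
    | zero => rw [XCaux.Fobj_zero]; simp
    | succ k ih =>
      rw [Finset.sum_Icc_succ_top (Nat.le_add_left 1 k), XCaux.Fobj_succ]
      have hmin := hFmin k (yp (k + 2)) (hfeas (k + 2) (by omega))
      linarith
  -- per-round drift bound
  have hE : ∀ t ∈ Finset.Icc 1 T,
      dot (c t) (yp (t + 1)) - dot (c t) (yp t) - σt t / 2 * XCaux.d2 (yp (t + 1)) (yp t)
        ≤ 2 / σ * (Real.sqrt (G t) - Real.sqrt (G (t - 1))) := by
    intro t ht
    obtain ⟨ht1, ht2⟩ := Finset.mem_Icc.mp ht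
    obtain ⟨k, rfl⟩ : ∃ k, t = k + 1 := ⟨t - 1, by omega⟩
    simp only [Nat.add_sub_cancel, show k + 1 + 1 = k + 2 from rfl]
    set D := XCaux.d2 (yp (k + 2)) (yp (k + 1)) with hDdef
    have hDnn : 0 ≤ D := XCaux.d2_nonneg _ _
    set d := Real.sqrt D with hddef
    have hdnn : 0 ≤ d := Real.sqrt_nonneg _
    have hd2 : d ^ 2 = D := Real.sq_sqrt hDnn
    have hwtt := hwt (k + 1)
    simp only [Set.mem_Icc] at hwtt
    have hgrec := hGrec (k + 1) (by omega)
    simp only [Nat.add_sub_cancel] at hgrec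
    have hsm : Real.sqrt (G k) ≤ Real.sqrt (G (k + 1)) :=
      Real.sqrt_le_sqrt (by nlinarith [sq_nonneg (wt (k + 1))])
    have hst : σt (k + 1) = σ * (Real.sqrt (G (k + 1)) - Real.sqrt (G k)) := by
      rw [hσt]; simp only [Nat.add_sub_cancel]
    -- Cauchy–Schwarz style bound
    have hdotp : ∀ x : Fin N → ℝ, dot (c (k + 1)) x = wt (k + 1) * x (nt (k + 1)) := by
      intro x; rw [hc (k + 1)]; exact XCaux.dot_delta _ _ _
    have habs : |yp (k + 2) (nt (k + 1)) - yp (k + 1) (nt (k + 1))| ≤ d := by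
      rw [← Real.sqrt_sq_eq_abs]
      apply Real.sqrt_le_sqrt
      exact Finset.single_le_sum (f := fun n => (yp (k + 2) n - yp (k + 1) n) ^ 2)
        (fun i _ => sq_nonneg _) (Finset.mem_univ _)
    have hCS : dot (c (k + 1)) (yp (k + 2)) - dot (c (k + 1)) (yp (k + 1))
        ≤ wt (k + 1) * d := by
      rw [hdotp, hdotp]
      have h := abs_le.mp habs
      nlinarith [h.1, h.2, hwtt.1]
    -- strong-convexity pair
    have hi := hstrong k (yp (k + 2)) (hfeas (k + 2) (by omega))
    have hii := hstrong (k + 1) (yp (k + 1)) (hfeas (k + 1) (by omega))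
    simp only [show k + 1 + 1 = k + 2 from rfl] at hii
    rw [XCaux.Fobj_succ, XCaux.Fobj_succ] at hii
    rw [XCaux.d2_comm (yp (k + 1)) (yp (k + 2)), XCaux.d2_self] at hii
    rw [hst] at hii
    have hkey : σ * Real.sqrt (G (k + 1)) * D
        ≤ dot (c (k + 1)) (yp (k + 2)) - dot (c (k + 1)) (yp (k + 1)) := by
      linarith [hi, hii]
    -- conclude
    have hσtDnn : 0 ≤ σt (k + 1) / 2 * D :=
      mul_nonneg (by have := hσtnn (k + 1); linarith) hDnn
    have hsuff : wt (k + 1) * d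
        ≤ 2 / σ * (Real.sqrt (G (k + 1)) - Real.sqrt (G k)) := by
      rcases eq_or_lt_of_le (hGnn (k + 1)) with hg0 | hgpos
      · have hGk0 : G k = 0 := by nlinarith [hGnn k, sq_nonneg (wt (k + 1))]
        have hwt0 : wt (k + 1) = 0 := by
          have : wt (k + 1) ^ 2 = 0 := by nlinarith [hGnn k]
          exact pow_eq_zero_iff (n := 2) (by norm_num) |>.mp this
        rw [hwt0, ← hg0, hGk0]
        simp
      · have hsG : 0 < Real.sqrt (G (k + 1)) := Real.sqrt_pos.mpr hgpos
        have hkey2 : σ * Real.sqrt (G (k + 1)) * d ^ 2 ≤ wt (k + 1) * d := by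
          rw [hd2]; linarith [hkey, hCS]
        rcases eq_or_lt_of_le hdnn with hdz | hdpos
        · rw [← hdz, mul_zero]
          apply mul_nonneg (by positivity)
          linarith
        · have hdle : d ≤ wt (k + 1) / (σ * Real.sqrt (G (k + 1))) := by
            rw [le_div_iff₀ (by positivity)]
            nlinarith [hkey2]
          have h1 : wt (k + 1) * d ≤ wt (k + 1) * (wt (k + 1) / (σ * Real.sqrt (G (k + 1)))) :=
            mul_le_mul_of_nonneg_left hdle hwtt.1
          have h2 : wt (k + 1) * (wt (k + 1) / (σ * Real.sqrt (G (k + 1))))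
              ≤ 2 / σ * (Real.sqrt (G (k + 1)) - Real.sqrt (G k)) := by
            rw [← mul_div_assoc, div_le_iff₀ (by positivity)]
            have e : 2 / σ * (Real.sqrt (G (k + 1)) - Real.sqrt (G k))
                * (σ * Real.sqrt (G (k + 1)))
                = 2 * (Real.sqrt (G (k + 1)) - Real.sqrt (G k)) * Real.sqrt (G (k + 1)) := by
              field_simp
            rw [e]
            have ha2 : Real.sqrt (G (k + 1)) ^ 2 = G (k + 1) := Real.sq_sqrt (hGnn _)
            have hb2 : Real.sqrt (G k) ^ 2 = G k := Real.sq_sqrt (hGnn _)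
            nlinarith [sq_nonneg (Real.sqrt (G (k + 1)) - Real.sqrt (G k))]
          linarith
    linarith [hCS, hσtDnn, hsuff]
  -- sum of drift terms
  have hEsum : ∑ t ∈ Finset.Icc 1 T,
      (dot (c t) (yp (t + 1)) - dot (c t) (yp t) - σt t / 2 * XCaux.d2 (yp (t + 1)) (yp t))
      ≤ 2 / σ * Real.sqrt (G T) := by
    calc ∑ t ∈ Finset.Icc 1 T,
        (dot (c t) (yp (t + 1)) - dot (c t) (yp t) - σt t / 2 * XCaux.d2 (yp (t + 1)) (yp t))
        ≤ ∑ t ∈ Finset.Icc 1 T, 2 / σ * (Real.sqrt (G t) - Real.sqrt (G (t - 1))) :=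
          Finset.sum_le_sum hE
      _ = 2 / σ * ∑ t ∈ Finset.Icc 1 T,
            ((fun s => Real.sqrt (G s)) t - (fun s => Real.sqrt (G s)) (t - 1)) := by
          rw [Finset.mul_sum]
      _ = 2 / σ * (Real.sqrt (G T) - Real.sqrt (G 0)) := by
          rw [XCaux.sum_tele (fun s => Real.sqrt (G s)) T]
      _ = 2 / σ * Real.sqrt (G T) := by rw [hG0, Real.sqrt_zero]; ring
  -- regularizer sum
  have hr1 : ∑ t ∈ Finset.Icc 1 T, σt t / 2 * XCaux.d2 ystar (yp t)
      ≤ σ * Real.sqrt (G T) * C := by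
    calc ∑ t ∈ Finset.Icc 1 T, σt t / 2 * XCaux.d2 ystar (yp t)
        ≤ ∑ t ∈ Finset.Icc 1 T, σt t * C := by
          apply Finset.sum_le_sum
          intro t ht
          have h1 := XCaux.d2_le_2C ystar (yp t) hystar (hfeas t (Finset.mem_Icc.mp ht).1)
          have h2 := hσtnn t
          have h3 := XCaux.d2_nonneg ystar (yp t)
          nlinarith
      _ = (∑ t ∈ Finset.Icc 1 T, σt t) * C := by rw [Finset.sum_mul]
      _ = σ * Real.sqrt (G T) * C := by rw [hS]
  -- main chain
  have hfin := hFmin T ystar hystar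
  have hmain := hBTL T
  have hsplit2 : XCaux.Fobj σt yp c T ystar
      = (∑ t ∈ Finset.Icc 1 T, σt t / 2 * XCaux.d2 ystar (yp t))
        - ∑ t ∈ Finset.Icc 1 T, dot (c t) ystar := by
    unfold XCaux.Fobj
    rw [XCaux.dot_sum_left]
  have hsplit3 : ∑ t ∈ Finset.Icc 1 T,
      (σt t / 2 * XCaux.d2 (yp (t + 1)) (yp t) - dot (c t) (yp (t + 1)))
      = (∑ t ∈ Finset.Icc 1 T, σt t / 2 * XCaux.d2 (yp (t + 1)) (yp t))
        - ∑ t ∈ Finset.Icc 1 T, dot (c t) (yp (t + 1)) := Finset.sum_sub_distrib _ _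
  have hEsplit : ∑ t ∈ Finset.Icc 1 T,
      (dot (c t) (yp (t + 1)) - dot (c t) (yp t) - σt t / 2 * XCaux.d2 (yp (t + 1)) (yp t))
      = (∑ t ∈ Finset.Icc 1 T, dot (c t) (yp (t + 1)))
        - (∑ t ∈ Finset.Icc 1 T, dot (c t) (yp t))
        - ∑ t ∈ Finset.Icc 1 T, σt t / 2 * XCaux.d2 (yp (t + 1)) (yp t) := by
    rw [Finset.sum_sub_distrib, Finset.sum_sub_distrib]
  have hgoal : ∑ t ∈ Finset.Icc 1 T, dot (c t) (fun n => ystar n - yp t n)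
      = (∑ t ∈ Finset.Icc 1 T, dot (c t) ystar)
        - ∑ t ∈ Finset.Icc 1 T, dot (c t) (yp t) := by
    rw [← Finset.sum_sub_distrib]
    exact Finset.sum_congr rfl fun t _ => XCaux.dot_sub (c t) ystar (yp t)
  -- numeric conclusion
  have hGTle : Real.sqrt (G T) ≤ w * Real.sqrt T := by
    have h1 : G T ≤ (T : ℝ) * w ^ 2 := by
      rw [hG]
      calc ∑ τ ∈ Finset.Icc 1 T, ∑ n, c τ n ^ 2
          = ∑ τ ∈ Finset.Icc 1 T, wt τ ^ 2 := Finset.sum_congr rfl fun τ _ => hgt τ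
        _ ≤ ∑ _τ ∈ Finset.Icc 1 T, w ^ 2 := Finset.sum_le_sum fun τ _ => by
            have h := hwt τ; simp only [Set.mem_Icc] at h; nlinarith [h.1, h.2]
        _ = (T : ℝ) * w ^ 2 := by
            rw [Finset.sum_const, Nat.card_Icc]
            simp
    calc Real.sqrt (G T) ≤ Real.sqrt ((T : ℝ) * w ^ 2) := Real.sqrt_le_sqrt h1
      _ = w * Real.sqrt T := by
          rw [Real.sqrt_mul (by positivity), Real.sqrt_sq hw.le]; ring
  have hσC : σ * C = Real.sqrt (2 * (C : ℝ)) := by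
    rw [hσ, div_mul_eq_mul_div, div_eq_iff (ne_of_gt hsC)]
    nlinarith [hsC2]
  have hiσ : 2 / σ = Real.sqrt (2 * (C : ℝ)) := by
    rw [eq_comm, eq_div_iff (ne_of_gt hσpos), hσ]
    field_simp
  have hsplitRT : Real.sqrt (2 * (C : ℝ) * T) = Real.sqrt (2 * (C : ℝ)) * Real.sqrt T := by
    rw [← Real.sqrt_mul h2C.le]
  have hnum : σ * Real.sqrt (G T) * C + 2 / σ * Real.sqrt (G T)
      ≤ 2 * w * Real.sqrt (2 * (C : ℝ) * T) := by
    have e1 : σ * Real.sqrt (G T) * C = Real.sqrt (2 * (C : ℝ)) * Real.sqrt (G T) := by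
      rw [← hσC]; ring
    have e2 : 2 / σ * Real.sqrt (G T) = Real.sqrt (2 * (C : ℝ)) * Real.sqrt (G T) := by
      rw [hiσ]
    have e3 : 2 * w * Real.sqrt (2 * (C : ℝ) * T)
        = 2 * Real.sqrt (2 * (C : ℝ)) * (w * Real.sqrt T) := by
      rw [hsplitRT]; ring
    rw [e1, e2, e3]
    nlinarith [mul_le_mul_of_nonneg_left hGTle
      (le_of_lt (by positivity : (0:ℝ) < 2 * Real.sqrt (2 * (C : ℝ))))]
  rw [hgoal]
  linarith [hfin, hmain, hEsum, hr1, hsplit2, hsplit3, hEsplit]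


end XCaux

/-- **Theorem 3 (XC regret bound).** Algorithm XC ensures
`R^{(xc)} = ∑_{t=1}^T c_t·(y⋆ − y_t) ≤ 2w√(2T) + A` with
`A = min{R^{(p)}, R^{(o)}} ∈ [−wT, 2w√(2CT)]`; in particular
`R^{(xc)} ≤ 2w√(2T) + 2w√(2CT)`. -/
theorem xc_regret
    (N C T : ℕ) (hN : 1 ≤ N) (hC : 1 ≤ C) (hCN : C < N) (hT : 1 ≤ T)
    (w : ℝ) (hw : 0 < w)
    (wt : ℕ → ℝ) (hwt : ∀ t, wt t ∈ Set.Icc 0 w) (nt : ℕ → Fin N)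
    -- utility gradients `c_t = w_t e_{n_t}`
    (c : ℕ → Fin N → ℝ) (hc : ∀ t, c t = fun n => if n = nt t then wt t else 0)
    -- predictions
    (ctil : ℕ → Fin N → ℝ)
    (wtil : ℕ → ℝ) (hwtil : ∀ t, wtil t ∈ Set.Icc 0 w) (ntil : ℕ → Fin N)
    (hctil : ∀ t, ctil t = fun n => if n = ntil t then wtil t else 0)
    -- pessimistic expert: FTRL with zero predictions
    (G : ℕ → ℝ) (hG : ∀ t, G t = ∑ τ ∈ Finset.Icc 1 t, ∑ n, (c τ n) ^ 2)
    (σ : ℝ) (hσ : σ = 2 / Real.sqrt (2 * (C : ℝ)))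
    (σt : ℕ → ℝ) (hσt : ∀ t, σt t = σ * (Real.sqrt (G t) - Real.sqrt (G (t - 1))))
    (yp : ℕ → Fin N → ℝ)
    (hyp1 : FeasibleY N C (yp 1))
    (hpstep : ∀ t, 1 ≤ t →
      FeasibleY N C (yp (t + 1)) ∧
      ∀ y', FeasibleY N C y' →
        (∑ τ ∈ Finset.Icc 1 t, σt τ / 2 * ∑ n, (yp (t + 1) n - yp τ n) ^ 2)
            - dot (fun n => ∑ τ ∈ Finset.Icc 1 t, c τ n) (yp (t + 1))
          ≤ (∑ τ ∈ Finset.Icc 1 t, σt τ / 2 * ∑ n, (y' n - yp τ n) ^ 2)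
            - dot (fun n => ∑ τ ∈ Finset.Icc 1 t, c τ n) y')
    -- optimistic expert: plays a maximizer of the predicted utility
    (yo : ℕ → Fin N → ℝ)
    -- experts' utility vectors `l_t = (c_t·y_t^{(p)}, c_t·y_t^{(o)})`
    (l : ℕ → Fin 2 → ℝ) (hl : ∀ t, l t = ![dot (c t) (yp t), dot (c t) (yo t)])
    -- meta-learner: online gradient ascent on the simplex
    (u : ℕ → Fin 2 → ℝ) (hu1 : Simplex2 (u 1))
    (hustep : ∀ t, 1 ≤ t →
      Simplex2 (u (t + 1)) ∧
      ∀ v, Simplex2 v →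
        ∑ k, (u (t + 1) k - (u t k + 1 / (w * Real.sqrt (t : ℝ)) * l t k)) ^ 2
          ≤ ∑ k, (v k - (u t k + 1 / (w * Real.sqrt (t : ℝ)) * l t k)) ^ 2)
    -- combined caching decisions
    (y : ℕ → Fin N → ℝ)
    (hy : ∀ t, y t = fun n => u t 0 * yp t n + u t 1 * yo t n)
    -- best static configuration in hindsight
    (ystar : Fin N → ℝ) (hystar : FeasibleY N C ystar)
    (hystarmax : ∀ y', FeasibleY N C y' →
      ∑ t ∈ Finset.Icc 1 T, dot (c t) y' ≤ ∑ t ∈ Finset.Icc 1 T, dot (c t) ystar)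
    (hyo1 : FeasibleY N C (yo 1))
    (hostep : ∀ t, 1 ≤ t →
      FeasibleY N C (yo (t + 1)) ∧
      ∀ y', FeasibleY N C y' →
        dot (ctil (t + 1)) y' ≤ dot (ctil (t + 1)) (yo (t + 1))) :
    (∑ t ∈ Finset.Icc 1 T, dot (c t) (fun n => ystar n - y t n)
        ≤ 2 * w * Real.sqrt (2 * (T : ℝ))
          + min (∑ t ∈ Finset.Icc 1 T, dot (c t) (fun n => ystar n - yp t n))
                (∑ t ∈ Finset.Icc 1 T, dot (c t) (fun n => ystar n - yo t n))) ∧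
    (-(w * (T : ℝ))
        ≤ min (∑ t ∈ Finset.Icc 1 T, dot (c t) (fun n => ystar n - yp t n))
              (∑ t ∈ Finset.Icc 1 T, dot (c t) (fun n => ystar n - yo t n))) ∧
    (min (∑ t ∈ Finset.Icc 1 T, dot (c t) (fun n => ystar n - yp t n))
         (∑ t ∈ Finset.Icc 1 T, dot (c t) (fun n => ystar n - yo t n))
        ≤ 2 * w * Real.sqrt (2 * (C : ℝ) * (T : ℝ))) ∧
    (∑ t ∈ Finset.Icc 1 T, dot (c t) (fun n => ystar n - y t n)
        ≤ 2 * w * Real.sqrt (2 * (T : ℝ)) + 2 * w * Real.sqrt (2 * (C : ℝ) * (T : ℝ))) := by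
  classical
  -- feasibility / simplex membership of iterates
  have hypfeas : ∀ t, 1 ≤ t → FeasibleY N C (yp t) := by
    intro t
    induction t with
    | zero => intro h; omega
    | succ k ih =>
      intro _
      rcases Nat.eq_zero_or_pos k with h0 | h1
      · subst h0; exact hyp1
      · exact (hpstep k h1).1
  have hyofeas : ∀ t, 1 ≤ t → FeasibleY N C (yo t) := by
    intro t
    induction t with
    | zero => intro h; omega
    | succ k ih =>
      intro _
      rcases Nat.eq_zero_or_pos k with h0 | h1
      · subst h0; exact hyo1
      · exact (hostep k h1).1
  have husimp : ∀ t, 1 ≤ t → Simplex2 (u t) := by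
    intro t
    induction t with
    | zero => intro h; omega
    | succ k ih =>
      intro _
      rcases Nat.eq_zero_or_pos k with h0 | h1
      · subst h0; exact hu1
      · exact (hustep k h1).1
  have hdotc : ∀ t (v : Fin N → ℝ), dot (c t) v = wt t * v (nt t) := by
    intro t v; rw [hc t]; exact XCaux.dot_delta _ _ _
  have hwtb : ∀ t, 0 ≤ wt t ∧ wt t ≤ w := by
    intro t; have := hwt t; simpa [Set.mem_Icc] using this
  have hdotbd : ∀ t v, FeasibleY N C v → 0 ≤ dot (c t) v ∧ dot (c t) v ≤ w := by
    intro t v hv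
    rw [hdotc]
    have h1 := hv.1 (nt t)
    simp only [Set.mem_Icc] at h1
    have h2 := hwtb t
    exact ⟨mul_nonneg h2.1 h1.1, by nlinarith [h2.1, h2.2, h1.1, h1.2]⟩
  have hl0 : ∀ t, l t 0 = dot (c t) (yp t) := by
    intro t; rw [hl t]; rfl
  have hl1 : ∀ t, l t 1 = dot (c t) (yo t) := by
    intro t; rw [hl t]; rfl
  have hxbd : ∀ t, 1 ≤ t → t ≤ T + 1 → (fun t => u t 0) t ∈ Set.Icc (0 : ℝ) 1 := by
    intro t h1 _
    obtain ⟨ha, hb, hc'⟩ := husimp t h1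
    exact ⟨ha, by linarith⟩
  have hgbd : ∀ t, 1 ≤ t → t ≤ T → |(fun t => l t 0 - l t 1) t| ≤ w := by
    intro t h1 h2
    have hp := hdotbd t (yp t) (hypfeas t h1)
    have ho := hdotbd t (yo t) (hyofeas t h1)
    have e0 := hl0 t
    have e1 := hl1 t
    rw [abs_le]
    constructor <;> simp only <;> rw [e0, e1] <;> linarith [hp.1, hp.2, ho.1, ho.2]
  -- variational inequality for the meta learner
  have hVI : ∀ s : ℝ, s ∈ Set.Icc (0 : ℝ) 1 → ∀ t, 1 ≤ t → t ≤ T →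
      0 ≤ (s - u (t + 1) 0) *
        (u (t + 1) 0 - (u t 0 + 1 / (2 * w * Real.sqrt t) * (l t 0 - l t 1))) := by
    intro s hs t ht1 ht2
    have hp := husimp (t + 1) (by omega)
    have hu := husimp t ht1
    have hvs : Simplex2 ![s, 1 - s] := by
      refine ⟨?_, ?_, ?_⟩
      · show (0 : ℝ) ≤ s; exact hs.1
      · show (0 : ℝ) ≤ 1 - s; linarith [hs.2]
      · show s + (1 - s) = 1; ring
    have hproj := XCaux.proj_vi Simplex2 (u (t + 1))
        (fun k => u t k + 1 / (w * Real.sqrt t) * l t k) ![s, 1 - s]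
        (fun lam h0 h1 => XCaux.simplex_segment _ _ hp hvs lam h0 h1)
        (fun v' hv' => (hustep t ht1).2 v' hv')
    rw [Fin.sum_univ_two] at hproj
    have hp1 : u (t + 1) 1 = 1 - u (t + 1) 0 := by
      obtain ⟨_, _, h⟩ := hp; linarith
    have hu1' : u t 1 = 1 - u t 0 := by
      obtain ⟨_, _, h⟩ := hu; linarith
    have hv0 : (![s, 1 - s] : Fin 2 → ℝ) 0 = s := rfl
    have hv1 : (![s, 1 - s] : Fin 2 → ℝ) 1 = 1 - s := rfl
    rw [hv0, hv1, hp1, hu1'] at hproj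
    have htpos : (0 : ℝ) < (t : ℝ) := by exact_mod_cast ht1
    have hr : 0 < Real.sqrt t := Real.sqrt_pos.mpr htpos
    have hid : (s - u (t + 1) 0) *
        (u (t + 1) 0 - (u t 0 + 1 / (2 * w * Real.sqrt t) * (l t 0 - l t 1)))
        = 1 / 2 * ((s - u (t + 1) 0) *
            (u (t + 1) 0 - (u t 0 + 1 / (w * Real.sqrt t) * l t 0))
          + (1 - s - (1 - u (t + 1) 0)) *
            (1 - u (t + 1) 0 - (1 - u t 0 + 1 / (w * Real.sqrt t) * l t 1))) := by
      have hwne : w ≠ 0 := ne_of_gt hw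
      have hrne : Real.sqrt t ≠ 0 := ne_of_gt hr
      field_simp
      ring
    rw [hid]
    linarith [hproj]
  -- the two OGD regret bounds
  have hb1 : ∑ t ∈ Finset.Icc 1 T, (l t 0 - l t 1) * (1 - u t 0)
      ≤ 3 / 2 * w * Real.sqrt T :=
    XCaux.ogd_1d T w hw (fun t => u t 0) (fun t => l t 0 - l t 1) 1
      ⟨zero_le_one, le_refl 1⟩ hxbd hgbd
      (fun t h1 h2 => hVI 1 ⟨zero_le_one, le_refl 1⟩ t h1 h2)
  have hb0 : ∑ t ∈ Finset.Icc 1 T, (l t 0 - l t 1) * (0 - u t 0)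
      ≤ 3 / 2 * w * Real.sqrt T :=
    XCaux.ogd_1d T w hw (fun t => u t 0) (fun t => l t 0 - l t 1) 0
      ⟨le_refl 0, zero_le_one⟩ hxbd hgbd
      (fun t h1 h2 => hVI 0 ⟨le_refl 0, zero_le_one⟩ t h1 h2)
  -- per-round combination identities
  have hyt : ∀ t, 1 ≤ t → dot (c t) (y t) = u t 0 * l t 0 + u t 1 * l t 1 := by
    intro t h1
    rw [hy t, hl0, hl1]
    unfold dot
    rw [Finset.mul_sum, Finset.mul_sum, ← Finset.sum_add_distrib]
    apply Finset.sum_congr rfl; intros; ring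
  have hcomb1 : ∀ t ∈ Finset.Icc 1 T,
      dot (c t) (fun n => ystar n - yp t n) - dot (c t) (fun n => ystar n - y t n)
        = -((l t 0 - l t 1) * (1 - u t 0)) := by
    intro t ht
    obtain ⟨h1, _⟩ := Finset.mem_Icc.mp ht
    have hu1' : u t 1 = 1 - u t 0 := by
      obtain ⟨_, _, h⟩ := husimp t h1; linarith
    rw [XCaux.dot_sub, XCaux.dot_sub, hyt t h1, hu1', hl0, hl1]
    ring
  have hcomb0 : ∀ t ∈ Finset.Icc 1 T,
      dot (c t) (fun n => ystar n - yo t n) - dot (c t) (fun n => ystar n - y t n)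
        = -((l t 0 - l t 1) * (0 - u t 0)) := by
    intro t ht
    obtain ⟨h1, _⟩ := Finset.mem_Icc.mp ht
    have hu1' : u t 1 = 1 - u t 0 := by
      obtain ⟨_, _, h⟩ := husimp t h1; linarith
    rw [XCaux.dot_sub, XCaux.dot_sub, hyt t h1, hu1', hl0, hl1]
    ring
  have hsum1 : ∑ t ∈ Finset.Icc 1 T, dot (c t) (fun n => ystar n - y t n)
      ≤ (∑ t ∈ Finset.Icc 1 T, dot (c t) (fun n => ystar n - yp t n))
        + 3 / 2 * w * Real.sqrt T := by
    have e : (∑ t ∈ Finset.Icc 1 T, dot (c t) (fun n => ystar n - yp t n))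
        - ∑ t ∈ Finset.Icc 1 T, dot (c t) (fun n => ystar n - y t n)
        = ∑ t ∈ Finset.Icc 1 T, -((l t 0 - l t 1) * (1 - u t 0)) := by
      rw [← Finset.sum_sub_distrib]
      exact Finset.sum_congr rfl hcomb1
    have e2 : ∑ t ∈ Finset.Icc 1 T, -((l t 0 - l t 1) * (1 - u t 0))
        = -∑ t ∈ Finset.Icc 1 T, (l t 0 - l t 1) * (1 - u t 0) := by
      rw [Finset.sum_neg_distrib]
    linarith [hb1]
  have hsum0 : ∑ t ∈ Finset.Icc 1 T, dot (c t) (fun n => ystar n - y t n)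
      ≤ (∑ t ∈ Finset.Icc 1 T, dot (c t) (fun n => ystar n - yo t n))
        + 3 / 2 * w * Real.sqrt T := by
    have e : (∑ t ∈ Finset.Icc 1 T, dot (c t) (fun n => ystar n - yo t n))
        - ∑ t ∈ Finset.Icc 1 T, dot (c t) (fun n => ystar n - y t n)
        = ∑ t ∈ Finset.Icc 1 T, -((l t 0 - l t 1) * (0 - u t 0)) := by
      rw [← Finset.sum_sub_distrib]
      exact Finset.sum_congr rfl hcomb0
    have e2 : ∑ t ∈ Finset.Icc 1 T, -((l t 0 - l t 1) * (0 - u t 0))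
        = -∑ t ∈ Finset.Icc 1 T, (l t 0 - l t 1) * (0 - u t 0) := by
      rw [Finset.sum_neg_distrib]
    linarith [hb0]
  -- numeric comparison
  have hT32 : 3 / 2 * w * Real.sqrt T ≤ 2 * w * Real.sqrt (2 * (T : ℝ)) := by
    have h2T : Real.sqrt (2 * (T : ℝ)) = Real.sqrt 2 * Real.sqrt T :=
      Real.sqrt_mul (by norm_num) _
    have h12 : (1 : ℝ) ≤ Real.sqrt 2 := by
      rw [show (1 : ℝ) = Real.sqrt 1 by simp]
      exact Real.sqrt_le_sqrt (by norm_num)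
    have hTnn := Real.sqrt_nonneg (T : ℝ)
    rw [h2T]
    nlinarith [mul_nonneg hw.le hTnn,
      mul_nonneg (mul_nonneg hw.le hTnn) (sub_nonneg.mpr h12)]
  have part1 : ∑ t ∈ Finset.Icc 1 T, dot (c t) (fun n => ystar n - y t n)
      ≤ 2 * w * Real.sqrt (2 * (T : ℝ))
        + min (∑ t ∈ Finset.Icc 1 T, dot (c t) (fun n => ystar n - yp t n))
              (∑ t ∈ Finset.Icc 1 T, dot (c t) (fun n => ystar n - yo t n)) := by
    rcases le_total (∑ t ∈ Finset.Icc 1 T, dot (c t) (fun n => ystar n - yp t n))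
        (∑ t ∈ Finset.Icc 1 T, dot (c t) (fun n => ystar n - yo t n)) with hmm | hmm
    · rw [min_eq_left hmm]; linarith [hsum1]
    · rw [min_eq_right hmm]; linarith [hsum0]
  -- lower bound on expert regrets
  have hlow : ∀ yexp : ℕ → Fin N → ℝ, (∀ t, 1 ≤ t → FeasibleY N C (yexp t)) →
      -(w * (T : ℝ)) ≤ ∑ t ∈ Finset.Icc 1 T, dot (c t) (fun n => ystar n - yexp t n) := by
    intro yexp hfe
    have hper : ∀ t ∈ Finset.Icc 1 T,
        -w ≤ dot (c t) (fun n => ystar n - yexp t n) := by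
      intro t ht
      obtain ⟨h1, _⟩ := Finset.mem_Icc.mp ht
      rw [hdotc]
      have ha := hystar.1 (nt t)
      have hb := (hfe t h1).1 (nt t)
      simp only [Set.mem_Icc] at ha hb
      have hwtt := hwtb t
      nlinarith [ha.1, ha.2, hb.1, hb.2, hwtt.1, hwtt.2]
    calc -(w * (T : ℝ)) = ∑ _t ∈ Finset.Icc 1 T, (-w) := by
          rw [Finset.sum_const, Nat.card_Icc]
          simp
          ring
      _ ≤ ∑ t ∈ Finset.Icc 1 T, dot (c t) (fun n => ystar n - yexp t n) :=
          Finset.sum_le_sum hper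
  have part2 : -(w * (T : ℝ))
      ≤ min (∑ t ∈ Finset.Icc 1 T, dot (c t) (fun n => ystar n - yp t n))
            (∑ t ∈ Finset.Icc 1 T, dot (c t) (fun n => ystar n - yo t n)) :=
    le_min (hlow yp hypfeas) (hlow yo hyofeas)
  have part3 : min (∑ t ∈ Finset.Icc 1 T, dot (c t) (fun n => ystar n - yp t n))
        (∑ t ∈ Finset.Icc 1 T, dot (c t) (fun n => ystar n - yo t n))
      ≤ 2 * w * Real.sqrt (2 * (C : ℝ) * (T : ℝ)) :=
    le_trans (min_le_left _ _)
      (XCaux.ftrl_regret N C T hC w hw wt hwt nt c hc G hG σ hσ σt hσt yp hyp1 hpstep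
        ystar hystar)
  refine ⟨part1, part2, part3, by linarith [part1, part3]⟩
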